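/- arXiv:2009.11078 — 4 statements merged into one kernel-verified Lean document; each statement's English description precedes it below -/
import Mathlib

section
/- Let m ≥ 2 be an integer, a > 0, and |x₀| < a. Then ∫_0^∞ (e^{-2(x₀+a)r} + e^{2(x₀-a)r}) · r^m / (1 - e^{-4ar}) dr ≤ C/(a-|x₀|)^{m+1}, where C = 2·m!·∑_{k=0}^∞ (2k+1)^{-(m+1)} depends only on m. -/
open MeasureTheory Real

lemma aux_integrable_pow_mul_exp (n : ℕ) {c : ℝ} (hc : 0 < c) :
    IntegrableOn (fun t : ℝ => t ^ n * Real.exp (-(c * t))) (Set.Ioi (0 : ℝ)) := by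
  have h := integrableOn_rpow_mul_exp_neg_mul_rpow (s := (n : ℝ)) (p := 1) (b := c)
    (neg_one_lt_zero.trans_le (Nat.cast_nonneg n)) one_pos hc
  simpa [Real.rpow_natCast, Real.rpow_one, neg_mul] using h

lemma aux_integral_pow_mul_exp (n : ℕ) {c : ℝ} (hc : 0 < c) :
    ∫ t in Set.Ioi (0 : ℝ), t ^ n * Real.exp (-(c * t)) = (n.factorial : ℝ) / c ^ (n + 1) := by
  have h := Real.integral_rpow_mul_exp_neg_mul_Ioi (a := (n : ℝ) + 1) (r := c)
    (by positivity) hc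
  rw [show ((n : ℝ) + 1) - 1 = (n : ℝ) by ring] at h
  simp_rw [Real.rpow_natCast] at h
  rw [h, Real.Gamma_nat_eq_factorial,
    show ((n : ℝ) + 1) = ((n + 1 : ℕ) : ℝ) by push_cast; ring, Real.rpow_natCast]
  rw [div_pow, one_pow]
  ring

/-- Upper bound for the radial part of the diagonal Bergman kernel on the strip `{|x₀| < a}`,
with constant `C = 2 · m! · ∑_{k=0}^∞ (2k+1)^{-(m+1)}` depending only on `m`. -/
theorem bergman_radial_upper_bound (m : ℕ) (hm : 2 ≤ m) (a x₀ : ℝ) (ha : 0 < a)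
    (hx : |x₀| < a) :
    ∫ r in Set.Ioi (0 : ℝ),
        (Real.exp (-2 * (x₀ + a) * r) + Real.exp (2 * (x₀ - a) * r)) * r ^ m /
          (1 - Real.exp (-4 * a * r)) ≤
      (2 * (Nat.factorial m : ℝ) * ∑' k : ℕ, (1 : ℝ) / ((2 * k + 1 : ℝ)) ^ (m + 1)) /
        (a - |x₀|) ^ (m + 1) := by
  set b : ℝ := a - |x₀| with hbdef
  have hb : 0 < b := sub_pos.mpr hx
  have hba : b ≤ a := sub_le_self _ (abs_nonneg _)
  -- the dominating function
  set g : ℝ → ℝ := fun r => 2 * (r ^ m * Real.exp (-(2 * b * r)))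
      + (1 / (2 * a)) * (r ^ (m - 1) * Real.exp (-(2 * b * r))) with hgdef
  have h2b : 0 < 2 * b := by linarith
  have hg_int : IntegrableOn g (Set.Ioi (0 : ℝ)) :=
    ((aux_integrable_pow_mul_exp m h2b).const_mul 2).add
      ((aux_integrable_pow_mul_exp (m - 1) h2b).const_mul (1 / (2 * a)))
  -- pointwise nonnegativity and bound
  have hae : ∀ᵐ r ∂(volume.restrict (Set.Ioi (0 : ℝ))), r ∈ Set.Ioi (0 : ℝ) :=
    self_mem_ae_restrict measurableSet_Ioi
  have hmono : ∫ r in Set.Ioi (0 : ℝ),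
      (Real.exp (-2 * (x₀ + a) * r) + Real.exp (2 * (x₀ - a) * r)) * r ^ m /
        (1 - Real.exp (-4 * a * r)) ≤ ∫ r in Set.Ioi (0 : ℝ), g r := by
    apply integral_mono_of_nonneg
    · filter_upwards [hae] with r hr
      have hr0 : 0 < r := hr
      have hD : 0 < 1 - Real.exp (-4 * a * r) := by
        have : Real.exp (-4 * a * r) < 1 := Real.exp_lt_one_iff.mpr (by nlinarith)
        linarith
      positivity
    · exact hg_int
    · filter_upwards [hae] with r hr
      have hr0 : 0 < r := hr
      set t : ℝ := 4 * a * r with htdef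
      have ht : 0 < t := by positivity
      have hexp : Real.exp (-4 * a * r) ≤ 1 / (1 + t) := by
        have h1 : 1 + t ≤ Real.exp t := by linarith [Real.add_one_le_exp t]
        rw [show -4 * a * r = -t by rw [htdef]; ring, Real.exp_neg, inv_eq_one_div]
        exact one_div_le_one_div_of_le (by linarith) h1
      have hD' : t / (1 + t) ≤ 1 - Real.exp (-4 * a * r) := by
        have : 1 - 1 / (1 + t) = t / (1 + t) := by field_simp; ring
        linarith [hexp, this]
      have hD'pos : 0 < t / (1 + t) := by positivity
      have hE1 : Real.exp (-2 * (x₀ + a) * r) ≤ Real.exp (-(2 * b * r)) := by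
        apply Real.exp_le_exp.mpr
        have := neg_abs_le x₀
        nlinarith
      have hE2 : Real.exp (2 * (x₀ - a) * r) ≤ Real.exp (-(2 * b * r)) := by
        apply Real.exp_le_exp.mpr
        have := le_abs_self x₀
        nlinarith
      have hnum : (Real.exp (-2 * (x₀ + a) * r) + Real.exp (2 * (x₀ - a) * r)) * r ^ m
          ≤ 2 * Real.exp (-(2 * b * r)) * r ^ m := by
        have : (0:ℝ) ≤ r ^ m := by positivity
        nlinarith
      have hstep : (Real.exp (-2 * (x₀ + a) * r) + Real.exp (2 * (x₀ - a) * r)) * r ^ m /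
            (1 - Real.exp (-4 * a * r))
          ≤ (2 * Real.exp (-(2 * b * r)) * r ^ m) / (t / (1 + t)) := by
        apply div_le_div₀ (by positivity) hnum hD'pos hD'
      refine hstep.trans (le_of_eq ?_)
      have hrm : r ^ m = r ^ (m - 1) * r := by
        rw [← pow_succ]
        congr 1
        omega
      rw [hgdef]
      rw [hrm, htdef]
      have hE : (0:ℝ) < Real.exp (-(2 * b * r)) := Real.exp_pos _
      field_simp
      rw [hrm]
      ring
  refine hmono.trans ?_
  -- compute the integral of g
  have hval : ∫ r in Set.Ioi (0 : ℝ), g r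
      = 2 * ((m.factorial : ℝ) / (2 * b) ^ (m + 1))
        + (1 / (2 * a)) * (((m - 1).factorial : ℝ) / (2 * b) ^ (m - 1 + 1)) := by
    rw [hgdef]
    rw [integral_add ((aux_integrable_pow_mul_exp m h2b).const_mul 2)
      ((aux_integrable_pow_mul_exp (m - 1) h2b).const_mul (1 / (2 * a))),
      integral_const_mul, integral_const_mul, aux_integral_pow_mul_exp m h2b,
      aux_integral_pow_mul_exp (m - 1) h2b]
  rw [hval]
  -- number crunching
  set S : ℝ := ∑' k : ℕ, (1 : ℝ) / ((2 * k + 1 : ℝ)) ^ (m + 1) with hSdef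
  have hSsum : Summable (fun k : ℕ => (1 : ℝ) / ((2 * k + 1 : ℝ)) ^ (m + 1)) := by
    have hsum : Summable (fun n : ℕ => (1 : ℝ) / (n : ℝ) ^ (m + 1)) := by
      rw [Real.summable_one_div_nat_pow]
      omega
    have := hsum.comp_injective (i := fun k : ℕ => 2 * k + 1)
      (fun x y hxy => by dsimp only at hxy; omega)
    refine this.congr fun k => ?_
    simp only [Function.comp_apply]
    push_cast
    ring_nf
  have hS1 : 1 ≤ S := by
    have h0 := hSsum.le_tsum 0 fun k _ => by positivity
    rw [hSdef]
    simpa [one_div] using h0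
  have hF : (0:ℝ) ≤ (m.factorial : ℝ) := by positivity
  have hF2 : ((m - 1).factorial : ℝ) ≤ (m.factorial : ℝ) := by
    exact_mod_cast Nat.factorial_le (by omega)
  have hm1 : m - 1 + 1 = m := by omega
  rw [hm1]
  have hBm : (0:ℝ) < b ^ (m + 1) := by positivity
  have hBm' : (0:ℝ) < b ^ m := by positivity
  have h2pow : (8:ℝ) ≤ 2 ^ (m + 1) := by
    calc (8:ℝ) = 2 ^ 3 := by norm_num
    _ ≤ 2 ^ (m + 1) := by
      apply pow_le_pow_right₀ (by norm_num)
      omega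
  -- term 1 bound
  have ht1 : 2 * ((m.factorial : ℝ) / (2 * b) ^ (m + 1))
      ≤ (m.factorial : ℝ) / (4 * b ^ (m + 1)) := by
    have heq : 2 * ((m.factorial : ℝ) / (2 * b) ^ (m + 1))
        = 2 * (m.factorial : ℝ) / (2 ^ (m + 1) * b ^ (m + 1)) := by
      rw [mul_pow]; ring
    rw [heq, div_le_div_iff₀ (by positivity) (by positivity)]
    nlinarith [mul_le_mul_of_nonneg_right h2pow (mul_nonneg hF hBm.le)]
  -- term 2 bound
  have ht2 : (1 / (2 * a)) * (((m - 1).factorial : ℝ) / (2 * b) ^ m)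
      ≤ (m.factorial : ℝ) / (8 * b ^ (m + 1)) := by
    have heq : (1 / (2 * a)) * (((m - 1).factorial : ℝ) / (2 * b) ^ m)
        = ((m - 1).factorial : ℝ) / (2 * a * (2 ^ m * b ^ m)) := by
      rw [mul_pow, div_mul_div_comm, one_mul]
    rw [heq]
    apply div_le_div₀ hF hF2 (by positivity)
    have h2m : (4:ℝ) ≤ 2 ^ m := by
      calc (4:ℝ) = 2 ^ 2 := by norm_num
      _ ≤ 2 ^ m := by
        apply pow_le_pow_right₀ (by norm_num)
        omega
    have hps : b ^ (m + 1) = b ^ m * b := pow_succ b m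
    nlinarith [mul_le_mul_of_nonneg_right (mul_le_mul h2m hba hb.le (by positivity)) hBm'.le]
  have hfinal : (m.factorial : ℝ) / (4 * b ^ (m + 1)) + (m.factorial : ℝ) / (8 * b ^ (m + 1))
      ≤ 2 * (m.factorial : ℝ) * S / b ^ (m + 1) := by
    rw [div_add_div _ _ (by positivity) (by positivity)]
    rw [div_le_div_iff₀ (by positivity) hBm]
    have hFS : (m.factorial : ℝ) ≤ (m.factorial : ℝ) * S := le_mul_of_one_le_right hF hS1
    nlinarith [mul_le_mul_of_nonneg_right hFS (mul_nonneg hBm.le hBm.le),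
      mul_nonneg hF (mul_nonneg hBm.le hBm.le)]
  linarith [ht1, ht2, hfinal]
end

section
/- Let a > 0, 0 < δ < a, m ≥ 1 and let u : S_a → ℝ be a function on the strip S_a = {(x₀,x) : |x₀| < a, x ∈ ℝ^m} ⊂ ℝ^{m+1} such that |u|² is subharmonic and ∫_{-a}^a ∫_{ℝ^m} |u|² dx dx₀ < ∞. Then for every x₀ with |x₀| < a - δ, ∫_{ℝ^m} |u(x₀ + x)|² dx ≤ (C'/δ) ∫_{-a}^a ∫_{ℝ^m} |u(y₀+y)|² dy dy₀, where C' depends only on m. -/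
open MeasureTheory Real
open scoped ENNReal

/-- `v` satisfies the sub-mean-value inequality on the open set `S` (the characterization of
subharmonicity used here): on every closed ball contained in `S`, the value at the center is
at most the ball average. -/
def SubMeanValueOn {E : Type*} [NormedAddCommGroup E] [NormedSpace ℝ E] [MeasureSpace E]
    (v : E → ℝ) (S : Set E) : Prop :=
  ∀ z ρ, 0 < ρ → Metric.closedBall z ρ ⊆ S →
    v z ≤ (1 / (volume (Metric.ball z ρ)).toReal) * ∫ y in Metric.ball z ρ, v y

/-- Slice estimate for square-integrable functions on the strip `S_a` whose square is
subharmonic: for `|x₀| < a - δ`, the slice `L²` norm is controlled by `C'/δ` times the full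
Bergman norm, with `C'` depending only on `m`. -/
theorem bergman_slice_estimate (m : ℕ) (hm : 1 ≤ m) :
    ∃ C' : ℝ, 0 < C' ∧
      ∀ (a δ : ℝ) (u : ℝ × EuclideanSpace ℝ (Fin m) → ℝ),
        0 < a → 0 < δ → δ < a →
        SubMeanValueOn (fun q => |u q| ^ 2)
          {q : ℝ × EuclideanSpace ℝ (Fin m) | |q.1| < a} →
        IntegrableOn (fun q => |u q| ^ 2) {q : ℝ × EuclideanSpace ℝ (Fin m) | |q.1| < a} →
        ∀ x₀ : ℝ, |x₀| < a - δ →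
          (∫ x : EuclideanSpace ℝ (Fin m), |u (x₀, x)| ^ 2) ≤
            C' / δ * ∫ y₀ in (-a : ℝ)..a, ∫ y : EuclideanSpace ℝ (Fin m), |u (y₀, y)| ^ 2 := by
  classical
  refine ⟨1, one_pos, ?_⟩
  intro a δ u ha hδ hδa hsub hint x₀ hx₀
  set ν : Measure (EuclideanSpace ℝ (Fin m)) := volume with hν
  set μ : Measure ℝ := volume with hμ
  set S : Set (ℝ × (EuclideanSpace ℝ (Fin m))) := {q : ℝ × (EuclideanSpace ℝ (Fin m)) | |q.1| < a} with hS
  set F : ℝ × (EuclideanSpace ℝ (Fin m)) → ℝ := fun q => |u q| ^ 2 with hFdef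
  have hF0 : ∀ q, 0 ≤ F q := fun q => pow_nonneg (abs_nonneg _) 2
  have hSopen : IsOpen S := by
    have : S = (fun q : ℝ × (EuclideanSpace ℝ (Fin m)) => |q.1|) ⁻¹' Set.Iio a := rfl
    rw [this]
    exact (continuous_abs.comp continuous_fst).isOpen_preimage _ isOpen_Iio
  have hSmeas : MeasurableSet S := hSopen.measurableSet
  set F' : ℝ × (EuclideanSpace ℝ (Fin m)) → ℝ := S.indicator F with hF'def
  have hF'0 : ∀ q, 0 ≤ F' q := fun q => Set.indicator_nonneg (fun p _ => hF0 p) q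
  have hF'int : Integrable F' := (integrable_indicator_iff hSmeas).2 hint
  -- measurable nonnegative representative G of F'
  obtain ⟨G₀, hG₀meas, hG₀ae⟩ := hF'int.1
  set G : ℝ × (EuclideanSpace ℝ (Fin m)) → ℝ := fun q => max (G₀ q) 0 with hGdef
  have hGmeas : Measurable G := hG₀meas.measurable.max measurable_const
  have hGae : F' =ᵐ[volume] G := by
    filter_upwards [hG₀ae] with q hq
    simp [hGdef, ← hq, max_eq_left (hF'0 q)]
  set g : ℝ × (EuclideanSpace ℝ (Fin m)) → ℝ≥0∞ := fun q => ENNReal.ofReal (G q) with hgdef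
  have hgmeas : Measurable g := ENNReal.measurable_ofReal.comp hGmeas
  have hgae : (fun q => ENNReal.ofReal (F' q)) =ᵐ[volume] g := by
    filter_upwards [hGae] with q hq; rw [hgdef]; simp [hq]
  have hT : ∫⁻ q, g q ∂(volume) ≠ ⊤ := by
    rw [← lintegral_congr_ae hgae]
    have := hF'int.2
    rw [hasFiniteIntegral_iff_ofReal (Filter.Eventually.of_forall hF'0)] at this
    exact this.ne
  set κ : ℝ≥0∞ := ν (Metric.ball (0 : (EuclideanSpace ℝ (Fin m))) δ) with hκ
  have hκ0 : κ ≠ 0 := (Metric.measure_ball_pos ν 0 hδ).ne'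
  have hκtop : κ ≠ ⊤ := measure_ball_lt_top.ne
  have hκr : 0 < κ.toReal := ENNReal.toReal_pos hκ0 hκtop
  -- volume of metric balls in the product
  have hvol : ∀ x : (EuclideanSpace ℝ (Fin m)), volume (Metric.ball ((x₀, x) : ℝ × (EuclideanSpace ℝ (Fin m))) δ) = ENNReal.ofReal (2 * δ) * κ := by
    intro x
    rw [← ball_prod_same, Measure.volume_eq_prod, Measure.prod_prod, Real.volume_ball,
      Measure.addHaar_ball_center]
  -- the dominating function
  set A : (EuclideanSpace ℝ (Fin m)) → ℝ≥0∞ := fun x => ∫⁻ q in Metric.ball x₀ δ ×ˢ Metric.ball x δ, g q ∂(volume) with hA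
  set c : ℝ := 1 / (2 * δ * κ.toReal) with hc
  have hc0 : 0 < c := by
    apply one_div_pos.2; positivity
  set h : (EuclideanSpace ℝ (Fin m)) → ℝ := fun x => c * (A x).toReal with hh
  -- pointwise bound
  have hpoint : ∀ x : (EuclideanSpace ℝ (Fin m)), F (x₀, x) ≤ h x := by
    intro x
    have hball : Metric.closedBall ((x₀, x) : ℝ × (EuclideanSpace ℝ (Fin m))) δ ⊆ S := by
      intro q hq
      have h1 : dist q.1 x₀ ≤ δ := by
        have := Metric.mem_closedBall.1 hq
        rw [Prod.dist_eq] at this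
        exact le_trans (le_max_left _ _) this
      have : |q.1| ≤ |q.1 - x₀| + |x₀| := by
        calc |q.1| = |q.1 - x₀ + x₀| := by ring_nf
        _ ≤ |q.1 - x₀| + |x₀| := abs_add_le _ _
      have : |q.1| < a := by
        rw [Real.dist_eq] at h1; linarith [abs_lt.1 hx₀]
      exact this
    have := hsub (x₀, x) δ hδ hball
    change F (x₀, x) ≤ (1 / (volume (Metric.ball ((x₀, x) : ℝ × (EuclideanSpace ℝ (Fin m))) δ)).toReal) * ∫ y in Metric.ball ((x₀, x) : ℝ × (EuclideanSpace ℝ (Fin m))) δ, F y at this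
    refine le_trans this ?_
    have hballS : Metric.ball ((x₀, x) : ℝ × (EuclideanSpace ℝ (Fin m))) δ ⊆ S :=
      le_trans Metric.ball_subset_closedBall hball
    have e1 : ∫ y in Metric.ball ((x₀, x) : ℝ × (EuclideanSpace ℝ (Fin m))) δ, F y =
        ∫ y in Metric.ball ((x₀, x) : ℝ × (EuclideanSpace ℝ (Fin m))) δ, F' y :=
      setIntegral_congr_fun Metric.isOpen_ball.measurableSet
        (fun q hq => (Set.indicator_of_mem (hballS hq) F).symm)
    have e2 : ∫ y in Metric.ball ((x₀, x) : ℝ × (EuclideanSpace ℝ (Fin m))) δ, F' y =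
        (∫⁻ y in Metric.ball ((x₀, x) : ℝ × (EuclideanSpace ℝ (Fin m))) δ, g y ∂(volume)).toReal := by
      rw [integral_eq_lintegral_of_nonneg_ae (Filter.Eventually.of_forall hF'0)
        (hF'int.1.restrict)]
      congr 1
      exact lintegral_congr_ae (ae_restrict_of_ae hgae)
    have e3 : (∫⁻ y in Metric.ball ((x₀, x) : ℝ × (EuclideanSpace ℝ (Fin m))) δ, g y ∂(volume)) = A x := by
      rw [← ball_prod_same]
    have e4 : (volume (Metric.ball ((x₀, x) : ℝ × (EuclideanSpace ℝ (Fin m))) δ)).toReal = 2 * δ * κ.toReal := by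
      rw [hvol x, ENNReal.toReal_mul, ENNReal.toReal_ofReal (by positivity)]
    rw [e1, e2, e3, e4, hh]
  -- the kernel on the product space
  set f : (EuclideanSpace ℝ (Fin m)) → (ℝ × (EuclideanSpace ℝ (Fin m))) → ℝ≥0∞ :=
    fun x q => (Metric.ball x₀ δ ×ˢ Metric.ball x δ).indicator g q with hf
  have hAf : A = fun x => ∫⁻ q, f x q ∂(volume) := by
    funext x
    rw [hA, hf, lintegral_indicator (measurableSet_ball.prod measurableSet_ball)]
  have huncurry : Measurable (Function.uncurry f) := by
    have hU : IsOpen {p : (EuclideanSpace ℝ (Fin m)) × (ℝ × (EuclideanSpace ℝ (Fin m))) | p.2.1 ∈ Metric.ball x₀ δ ∧ p.2.2 ∈ Metric.ball p.1 δ} := by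
      have : {p : (EuclideanSpace ℝ (Fin m)) × (ℝ × (EuclideanSpace ℝ (Fin m))) | p.2.1 ∈ Metric.ball x₀ δ ∧ p.2.2 ∈ Metric.ball p.1 δ} =
          ((fun p : (EuclideanSpace ℝ (Fin m)) × (ℝ × (EuclideanSpace ℝ (Fin m))) => dist p.2.1 x₀) ⁻¹' Set.Iio δ) ∩
          ((fun p : (EuclideanSpace ℝ (Fin m)) × (ℝ × (EuclideanSpace ℝ (Fin m))) => dist p.2.2 p.1) ⁻¹' Set.Iio δ) := by
        ext p; simp [Metric.mem_ball]
      rw [this]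
      exact ((Continuous.dist (continuous_fst.comp continuous_snd) continuous_const).isOpen_preimage
          _ isOpen_Iio).inter
        ((Continuous.dist (continuous_snd.comp continuous_snd) continuous_fst).isOpen_preimage
          _ isOpen_Iio)
    have : Function.uncurry f =
        Set.indicator {p : (EuclideanSpace ℝ (Fin m)) × (ℝ × (EuclideanSpace ℝ (Fin m))) | p.2.1 ∈ Metric.ball x₀ δ ∧ p.2.2 ∈ Metric.ball p.1 δ}
          (fun p => g p.2) := by
      funext p
      simp only [Function.uncurry, hf, Set.indicator_apply, Set.mem_prod, Set.mem_setOf_eq]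
    rw [this]
    exact (hgmeas.comp measurable_snd).indicator hU.measurableSet
  -- the key Tonelli computation
  have hinner : ∀ q : ℝ × (EuclideanSpace ℝ (Fin m)), ∫⁻ x, f x q ∂ν =
      (Metric.ball x₀ δ ×ˢ (Set.univ : Set (EuclideanSpace ℝ (Fin m)))).indicator (fun q => κ * g q) q := by
    intro q
    by_cases hq1 : q.1 ∈ Metric.ball x₀ δ
    · have hx : ∀ x : (EuclideanSpace ℝ (Fin m)), f x q = (Metric.ball q.2 δ).indicator (fun _ => g q) x := by
        intro x
        simp only [hf, Set.indicator_apply, Set.mem_prod, hq1, true_and, Metric.mem_ball,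
          dist_comm q.2 x]
        simp [Metric.mem_ball.1 hq1]
      rw [lintegral_congr hx, lintegral_indicator measurableSet_ball, setLIntegral_const,
        Measure.addHaar_ball_center]
      rw [Set.indicator_of_mem (by simp [hq1]), mul_comm]
    · have hx : ∀ x : (EuclideanSpace ℝ (Fin m)), f x q = 0 := by
        intro x
        simp only [hf, Set.indicator_apply, Set.mem_prod]
        simp [hq1]
      rw [lintegral_congr hx, lintegral_zero, Set.indicator_of_notMem (by simp [hq1])]
  have key : ∫⁻ x, A x ∂ν =
      κ * ∫⁻ q in Metric.ball x₀ δ ×ˢ (Set.univ : Set (EuclideanSpace ℝ (Fin m))), g q ∂(volume) := by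
    rw [hAf]
    rw [lintegral_lintegral_swap huncurry.aemeasurable]
    rw [lintegral_congr hinner,
      lintegral_indicator (measurableSet_ball.prod MeasurableSet.univ),
      lintegral_const_mul κ hgmeas]
  have hIa_le : (∫⁻ q in Metric.ball x₀ δ ×ˢ (Set.univ : Set (EuclideanSpace ℝ (Fin m))), g q ∂(volume)) ≤
      ∫⁻ q, g q ∂(volume) := setLIntegral_le_lintegral _ _
  have hkey_ne : ∫⁻ x, A x ∂ν ≠ ⊤ := by
    rw [key]
    exact ENNReal.mul_ne_top hκtop (lt_of_le_of_lt hIa_le (lt_top_iff_ne_top.2 hT)).ne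
  have hAmeas : Measurable A := by
    rw [hAf]; exact Measurable.lintegral_prod_right huncurry
  have hhint : Integrable h ν := by
    exact (integrable_toReal_of_lintegral_ne_top hAmeas.aemeasurable hkey_ne).const_mul c
  have hinth : ∫ x, h x ∂ν = c * (∫⁻ x, A x ∂ν).toReal := by
    rw [hh]
    rw [integral_const_mul]
    congr 1
    exact integral_toReal hAmeas.aemeasurable (ae_lt_top hAmeas hkey_ne)
  -- the right-hand side double integral
  set Ia : ℝ≥0∞ := ∫⁻ q in Set.Ioo (-a) a ×ˢ (Set.univ : Set (EuclideanSpace ℝ (Fin m))), g q ∂(volume) with hIa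
  have hIaT : Ia ≠ ⊤ := (lt_of_le_of_lt (setLIntegral_le_lintegral _ _)
    (lt_top_iff_ne_top.2 hT)).ne
  have hsubset : (Metric.ball x₀ δ ×ˢ (Set.univ : Set (EuclideanSpace ℝ (Fin m)))) ⊆
      Set.Ioo (-a) a ×ˢ (Set.univ : Set (EuclideanSpace ℝ (Fin m))) := by
    refine Set.prod_mono ?_ le_rfl
    intro y₀ hy₀
    rw [Metric.mem_ball, Real.dist_eq] at hy₀
    have h1 := abs_lt.1 hy₀
    have h2 := abs_lt.1 hx₀
    constructor <;> linarith
  have hIle : (∫⁻ q in Metric.ball x₀ δ ×ˢ (Set.univ : Set (EuclideanSpace ℝ (Fin m))), g q ∂(volume)) ≤ Ia :=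
    lintegral_mono_set hsubset
  -- identify the RHS with Ia.toReal
  have hRHS : (∫ y₀ in (-a : ℝ)..a, ∫ y : (EuclideanSpace ℝ (Fin m)), |u (y₀, y)| ^ 2 ∂ν) = Ia.toReal := by
    rw [intervalIntegral.integral_of_le (by linarith : (-a : ℝ) ≤ a),
      integral_Ioc_eq_integral_Ioo]
    have step1 : ∀ y₀ ∈ Set.Ioo (-a) a, (∫ y : (EuclideanSpace ℝ (Fin m)), |u (y₀, y)| ^ 2 ∂ν) =
        ∫ y : (EuclideanSpace ℝ (Fin m)), F' (y₀, y) ∂ν := by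
      intro y₀ hy₀
      have : (fun y : (EuclideanSpace ℝ (Fin m)) => |u (y₀, y)| ^ 2) = fun y : (EuclideanSpace ℝ (Fin m)) => F' (y₀, y) := by
        funext y
        have hmem : ((y₀, y) : ℝ × (EuclideanSpace ℝ (Fin m))) ∈ S := by
          simp only [hS, Set.mem_setOf_eq]
          exact abs_lt.2 ⟨hy₀.1, hy₀.2⟩
        rw [hF'def, Set.indicator_of_mem hmem, hFdef]
      rw [this]
    rw [setIntegral_congr_fun measurableSet_Ioo step1]
    -- Fubini
    have hres : (volume : Measure (ℝ × (EuclideanSpace ℝ (Fin m)))).restrict (Set.Ioo (-a) a ×ˢ (Set.univ : Set (EuclideanSpace ℝ (Fin m)))) =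
        (μ.restrict (Set.Ioo (-a) a)).prod ν := by
      rw [Measure.volume_eq_prod, ← Measure.prod_restrict, Measure.restrict_univ]
    have hint2 : Integrable F' ((μ.restrict (Set.Ioo (-a) a)).prod ν) := by
      rw [← hres]; exact hF'int.restrict
    have hfub := integral_prod F' hint2
    rw [← hfub]
    rw [integral_eq_lintegral_of_nonneg_ae (Filter.Eventually.of_forall hF'0) hint2.1]
    have hae2 : (fun q => ENNReal.ofReal (F' q)) =ᵐ[(μ.restrict (Set.Ioo (-a) a)).prod ν] g := by
      rw [← hres]; exact ae_restrict_of_ae hgae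
    rw [lintegral_congr_ae hae2, hIa]
    congr 1
    rw [← hres]
  -- put everything together
  have hinth2 : ∫ x, h x ∂ν ≤ 1 / δ * Ia.toReal := by
    rw [hinth, key, ENNReal.toReal_mul]
    have h1 : (∫⁻ q in Metric.ball x₀ δ ×ˢ (Set.univ : Set (EuclideanSpace ℝ (Fin m))), g q ∂(volume)).toReal ≤
        Ia.toReal := ENNReal.toReal_mono hIaT hIle
    have h2 : c * (κ.toReal *
        (∫⁻ q in Metric.ball x₀ δ ×ˢ (Set.univ : Set (EuclideanSpace ℝ (Fin m))), g q ∂(volume)).toReal) =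
        1 / (2 * δ) * (∫⁻ q in Metric.ball x₀ δ ×ˢ (Set.univ : Set (EuclideanSpace ℝ (Fin m))), g q ∂(volume)).toReal := by
      rw [hc]; field_simp
    rw [h2]
    have h3 : (1 : ℝ) / (2 * δ) ≤ 1 / δ := by
      apply div_le_div_of_nonneg_left one_pos.le hδ; linarith
    calc 1 / (2 * δ) * (∫⁻ q in Metric.ball x₀ δ ×ˢ (Set.univ : Set (EuclideanSpace ℝ (Fin m))), g q ∂(volume)).toReal
        ≤ 1 / (2 * δ) * Ia.toReal := by
          apply mul_le_mul_of_nonneg_left h1; positivity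
      _ ≤ 1 / δ * Ia.toReal := by
          apply mul_le_mul_of_nonneg_right h3 ENNReal.toReal_nonneg
  rw [hRHS]
  have hRHS0 : (0 : ℝ) ≤ 1 / δ * Ia.toReal := by positivity
  by_cases hsl : Integrable (fun x : (EuclideanSpace ℝ (Fin m)) => F (x₀, x)) ν
  · calc (∫ x : (EuclideanSpace ℝ (Fin m)), |u (x₀, x)| ^ 2 ∂ν) = ∫ x : (EuclideanSpace ℝ (Fin m)), F (x₀, x) ∂ν := rfl
      _ ≤ ∫ x, h x ∂ν := integral_mono hsl hhint hpoint
      _ ≤ 1 / δ * Ia.toReal := hinth2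
  · have : (∫ x : (EuclideanSpace ℝ (Fin m)), |u (x₀, x)| ^ 2 ∂ν) = 0 := integral_undef hsl
    rw [this]; exact hRHS0
end

section
/- Let p ∈ [1,2], q = p/(p-1) (q = ∞ if p = 1), a > 0, and g : ℝ^m → ℂ measurable. Suppose that for each x₀ ∈ (-a, a), ‖(e^{-x₀|ξ|} 1_A + e^{x₀|ξ|} 1_{A^c}) g‖_{L^q(ℝ^m)} ≤ C_p ‖f(x₀+·)‖_{L^p(ℝ^m)} for some measurable A ⊆ ℝ^m and f with ∫_{-a}^a ‖f(x₀+·)‖_{L^p}^p dx₀ < ∞ (for 1 < p < 2). Then (∫_{ℝ^m} (e^{pa|ξ|}-e^{-pa|ξ|})^{q/p} (|1_A g|^q + |1_{A^c} g|^q)/(p|ξ|)^{q/p} dξ)^{1/q} ≤ 2^{1/q} C_p (∫_{-a}^a ‖f(x₀+·)‖_{L^p}^p dx₀)^{1/p}. -/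
open MeasureTheory Real Classical

open scoped ENNReal

section Aux

lemma exp_aux_ineq {a t u : ℝ} (hu : 0 ≤ u) (h1 : -a ≤ t) (h2 : t ≤ a) :
    (a + t) * u * Real.exp (-(t*u)) ≤ Real.exp (a*u) - Real.exp (-(a*u)) := by
  have e1 : Real.exp (a*u) = Real.exp (-(t*u)) * Real.exp ((a+t)*u) := by
    rw [← Real.exp_add]; ring_nf
  have e2 : 1 + (a+t)*u ≤ Real.exp ((a+t)*u) := by
    have := Real.add_one_le_exp ((a+t)*u); linarith
  have e3 : Real.exp (-(a*u)) ≤ Real.exp (-(t*u)) := by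
    apply Real.exp_le_exp.mpr
    nlinarith
  nlinarith [Real.exp_pos (-(t*u)), mul_nonneg (by linarith : (0:ℝ) ≤ a+t) hu,
    mul_le_mul_of_nonneg_left e2 (Real.exp_pos (-(t*u))).le]

lemma int_exp_aux (a c : ℝ) (ha : 0 ≤ a) (hc : c ≠ 0) :
    ∫ t in Set.Ioo (-a) a, Real.exp (t * c)
      = (Real.exp (a*c) - Real.exp (-(a*c))) / c := by
  rw [← integral_Ioc_eq_integral_Ioo, ← intervalIntegral.integral_of_le (by linarith : -a ≤ a)]
  have h1 : ∀ t : ℝ, Real.exp (t * c) = Real.exp (c * t) := fun t => by ring_nf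
  simp_rw [h1]
  rw [intervalIntegral.integral_comp_mul_left (f := Real.exp) hc, integral_exp, smul_eq_mul]
  field_simp

lemma lint_exp_aux (a c K : ℝ) (ha : 0 ≤ a) (hc : c ≠ 0) (hK : 0 ≤ K) :
    ∫⁻ t in Set.Ioo (-a) a, ENNReal.ofReal (Real.exp (t*c) * K)
      = ENNReal.ofReal ((Real.exp (a*c) - Real.exp (-(a*c))) / c * K) := by
  rw [← ofReal_integral_eq_lintegral_ofReal]
  · rw [integral_mul_const, int_exp_aux a c ha hc]
  · apply Integrable.mono_measure ?_ (Measure.restrict_mono Set.Ioo_subset_Icc_self le_rfl)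
    apply ContinuousOn.integrableOn_compact isCompact_Icc
    exact (((continuous_id.mul continuous_const).rexp).mul continuous_const).continuousOn
  · exact Filter.Eventually.of_forall fun t => mul_nonneg (Real.exp_pos _).le hK

section Mink
open ENNReal in

lemma minkowski_lintegral {α β : Type*} [MeasurableSpace α] [MeasurableSpace β]
    (μ : Measure α) [SigmaFinite μ] (ν : Measure β) [SFinite ν] {F : β → α → ℝ≥0∞}
    (hF : Measurable (Function.uncurry F)) {r : ℝ} (hr : 1 < r)
    (hJtop : ∫⁻ x, (∫⁻ t, F t x ∂ν) ^ r ∂μ ≠ ∞) :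
    (∫⁻ x, (∫⁻ t, F t x ∂ν) ^ r ∂μ) ^ (1/r) ≤
      ∫⁻ t, (∫⁻ x, (F t x) ^ r ∂μ) ^ (1/r) ∂ν := by
  have hr0 : (0:ℝ) < r := lt_trans one_pos hr
  set S : α → ℝ≥0∞ := fun x => ∫⁻ t, F t x ∂ν with hS
  set J : ℝ≥0∞ := ∫⁻ x, S x ^ r ∂μ with hJ
  by_cases hJ0 : J = 0
  · rw [hJ0, ENNReal.zero_rpow_of_pos (by positivity)]
    exact zero_le'
  have hSmeas : Measurable S := hF.lintegral_prod_left
  have hSae' : ∀ᵐ x ∂μ, S x ≠ ∞ := by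
    have h1 := ae_lt_top (hSmeas.pow_const r) hJtop
    filter_upwards [h1] with x hx
    intro h
    rw [h, ENNReal.top_rpow_of_pos hr0] at hx
    exact absurd rfl hx.ne
  set r' : ℝ := r / (r - 1) with hr'
  have hconj : r.HolderConjugate r' := Real.HolderConjugate.conjExponent hr
  have hGmeas : Measurable fun t => (∫⁻ x, (F t x) ^ r ∂μ) ^ (1/r) := by
    have : Measurable (Function.uncurry fun t x => (F t x) ^ r) :=
      hF.pow_const r
    exact (this.lintegral_prod_right).pow_const _
  have key : J ≤ (∫⁻ t, (∫⁻ x, (F t x) ^ r ∂μ) ^ (1/r) ∂ν) * J ^ (1/r') := by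
    have step1 : J = ∫⁻ x, S x * S x ^ (r - 1) ∂μ := by
      rw [hJ]
      apply lintegral_congr_ae
      filter_upwards [hSae'] with x hx
      rcases eq_or_ne (S x) 0 with h0 | h0
      · rw [h0, ENNReal.zero_rpow_of_pos hr0, ENNReal.zero_rpow_of_pos (by linarith), mul_zero]
      · have h1 : (1:ℝ) + (r-1) = r := by ring
        conv_lhs => rw [← h1]
        rw [ENNReal.rpow_add _ _ h0 hx, ENNReal.rpow_one]
    have step2 : ∫⁻ x, S x * S x ^ (r - 1) ∂μ
        = ∫⁻ t, ∫⁻ x, F t x * S x ^ (r - 1) ∂μ ∂ν := by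
      rw [← lintegral_lintegral_swap]
      · exact lintegral_congr fun x =>
          (lintegral_mul_const _ (hF.comp (measurable_id.prodMk measurable_const))).symm
      · exact ((hF.comp measurable_swap).mul
          ((hSmeas.comp measurable_fst).pow_const _)).aemeasurable
    have step3 : ∀ t, ∫⁻ x, F t x * S x ^ (r - 1) ∂μ
        ≤ (∫⁻ x, (F t x) ^ r ∂μ) ^ (1/r) * J ^ (1/r') := by
      intro t
      have hFt : AEMeasurable (F t) μ :=
        (hF.comp (measurable_const.prodMk measurable_id)).aemeasurable
      refine (ENNReal.lintegral_mul_le_Lp_mul_Lq μ hconj hFt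
        ((hSmeas.pow_const (r-1)).aemeasurable)).trans (le_of_eq ?_)
      congr 2
      apply lintegral_congr fun x => ?_
      rw [← ENNReal.rpow_mul]
      have hr1 : r - 1 ≠ 0 := ne_of_gt (by linarith)
      congr 1
      rw [hr', mul_comm, div_mul_cancel₀ _ hr1]
    calc J = ∫⁻ t, ∫⁻ x, F t x * S x ^ (r - 1) ∂μ ∂ν := by rw [step1, step2]
      _ ≤ ∫⁻ t, (∫⁻ x, (F t x) ^ r ∂μ) ^ (1/r) * J ^ (1/r') ∂ν :=
          lintegral_mono step3
      _ = (∫⁻ t, (∫⁻ x, (F t x) ^ r ∂μ) ^ (1/r) ∂ν) * J ^ (1/r') :=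
          lintegral_mul_const _ hGmeas
  have hJr' : J ^ (1/r') ≠ 0 := by
    simp only [ne_eq, ENNReal.rpow_eq_zero_iff, not_or]
    push_neg
    constructor
    · intro h; exact absurd h hJ0
    · intro h; exact absurd h hJtop
  have hJr'top : J ^ (1/r') ≠ ∞ := by
    simp only [ne_eq, ENNReal.rpow_eq_top_iff, not_or]
    push_neg
    constructor
    · intro h; exact absurd h hJ0
    · intro h; exact absurd h hJtop
  have hfin : J ^ (1/r) * J ^ (1/r') ≤
      (∫⁻ t, (∫⁻ x, (F t x) ^ r ∂μ) ^ (1/r) ∂ν) * J ^ (1/r') := by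
    rw [one_div, one_div, ← ENNReal.rpow_add _ _ hJ0 hJtop, hconj.inv_add_inv_eq_one, ENNReal.rpow_one]
    simpa [one_div] using key
  exact (ENNReal.mul_le_mul_iff_left hJr' hJr'top).mp hfin

end Mink


set_option maxHeartbeats 1000000 in
/-- Integral form of the necessary Fourier condition for Bergman spaces `A^p` on the strip,
`1 < p < 2`, `q = p/(p-1)`: Minkowski's integral inequality applied to the slice-wise
Hausdorff–Young estimates yields the weighted `L^q` bound for `g`. -/
theorem bergman_necessary_fourier_bound (m : ℕ) (hm : 1 ≤ m) (a p q C_p : ℝ)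
    (ha : 0 < a) (hp : 1 < p) (hp2 : p < 2) (hq : q = p / (p - 1)) (hC : 0 < C_p)
    (g : EuclideanSpace ℝ (Fin m) → ℂ) (hgmeas : Measurable g)
    (A : Set (EuclideanSpace ℝ (Fin m))) (hA : MeasurableSet A)
    (f : ℝ × EuclideanSpace ℝ (Fin m) → ℂ)
    (hf : IntegrableOn
      (fun x₀ : ℝ => ∫ x : EuclideanSpace ℝ (Fin m), ‖f (x₀, x)‖ ^ p)
      (Set.Ioo (-a) a))
    (hslice : ∀ x₀ ∈ Set.Ioo (-a : ℝ) a,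
      (∫ ξ : EuclideanSpace ℝ (Fin m),
          ‖((if ξ ∈ A then Real.exp (-(x₀ * ‖ξ‖)) else Real.exp (x₀ * ‖ξ‖)) : ℂ) * g ξ‖ ^ q)
            ^ (1 / q) ≤
        C_p * (∫ x : EuclideanSpace ℝ (Fin m), ‖f (x₀, x)‖ ^ p) ^ (1 / p)) :
    (∫ ξ : EuclideanSpace ℝ (Fin m),
        (Real.exp (p * a * ‖ξ‖) - Real.exp (-(p * a * ‖ξ‖))) ^ (q / p) *
          (Set.indicator A (fun ξ' => ‖g ξ'‖ ^ q) ξ +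
            Set.indicator Aᶜ (fun ξ' => ‖g ξ'‖ ^ q) ξ) / (p * ‖ξ‖) ^ (q / p)) ^ (1 / q) ≤
      (2 : ℝ) ^ (1 / q) * C_p *
        (∫ x₀ in (-a : ℝ)..a, ∫ x : EuclideanSpace ℝ (Fin m), ‖f (x₀, x)‖ ^ p) ^ (1 / p) := by
  have hp0 : (0:ℝ) < p := by linarith
  have hp1 : (0:ℝ) < p - 1 := by linarith
  have hq0 : (0:ℝ) < q := by rw [hq]; positivity
  have hq1 : 1 < q := by rw [hq, lt_div_iff₀ hp1]; nlinarith
  set r : ℝ := q / p with hrdef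
  have hr1 : 1 < r := by
    rw [hrdef, hq, div_div, lt_div_iff₀ (by positivity)]
    nlinarith
  have hr0 : (0:ℝ) < r := by linarith
  have hpr : p * r = q := by rw [hrdef]; field_simp
  have hinvr : 1/r = p/q := by rw [hrdef]; rw [one_div_div]
  set N : ℝ → ℝ := fun t => ∫ x : (EuclideanSpace ℝ (Fin m)), ‖f (t, x)‖ ^ p with hNdef
  set Φ : (EuclideanSpace ℝ (Fin m)) → ℝ := fun ξ =>
    (Real.exp (p*a*‖ξ‖) - Real.exp (-(p*a*‖ξ‖))) / (p*‖ξ‖) with hΦdef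
  set L : (EuclideanSpace ℝ (Fin m)) → ℝ := fun ξ => Φ ξ ^ r * ‖g ξ‖ ^ q with hLdef
  set w : ℝ → (EuclideanSpace ℝ (Fin m)) → ℝ := fun t ξ =>
    if ξ ∈ A then Real.exp (-(t*‖ξ‖)) else Real.exp (t*‖ξ‖) with hwdef
  -- nonnegativity facts
  have hXnn : ∀ ξ : (EuclideanSpace ℝ (Fin m)), 0 ≤ Real.exp (p*a*‖ξ‖) - Real.exp (-(p*a*‖ξ‖)) := by
    intro ξ
    have : -(p*a*‖ξ‖) ≤ p*a*‖ξ‖ := neg_le_self (by positivity)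
    have := Real.exp_le_exp.mpr this
    linarith
  have hΦnn : ∀ ξ : (EuclideanSpace ℝ (Fin m)), 0 ≤ Φ ξ := fun ξ => div_nonneg (hXnn ξ) (by positivity)
  have hLnn : ∀ ξ : (EuclideanSpace ℝ (Fin m)), 0 ≤ L ξ := fun ξ =>
    mul_nonneg (Real.rpow_nonneg (hΦnn ξ) r) (Real.rpow_nonneg (norm_nonneg _) q)
  have hwpos : ∀ t (ξ : (EuclideanSpace ℝ (Fin m))), 0 < w t ξ := by
    intro t ξ
    rw [hwdef]
    dsimp only
    split <;> exact Real.exp_pos _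
  have hNnn : ∀ t, 0 ≤ N t := fun t =>
    integral_nonneg fun x => Real.rpow_nonneg (norm_nonneg _) p
  have hInn : 0 ≤ ∫ t in (-a)..a, N t :=
    intervalIntegral.integral_nonneg (by linarith) fun t _ => hNnn t
  have hRHS : 0 ≤ (2:ℝ) ^ (1/q) * C_p * (∫ t in (-a)..a, N t) ^ (1/p) :=
    mul_nonneg (mul_nonneg (Real.rpow_nonneg (by norm_num) _) hC.le)
      (Real.rpow_nonneg hInn _)
  -- rewrite the statement integrand as L
  have hrw : (fun ξ : (EuclideanSpace ℝ (Fin m)) =>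
      (Real.exp (p * a * ‖ξ‖) - Real.exp (-(p * a * ‖ξ‖))) ^ r *
          (Set.indicator A (fun ξ' => ‖g ξ'‖ ^ q) ξ +
            Set.indicator Aᶜ (fun ξ' => ‖g ξ'‖ ^ q) ξ) / (p * ‖ξ‖) ^ r) = L := by
    funext ξ
    have hind : Set.indicator A (fun ξ' : (EuclideanSpace ℝ (Fin m)) => ‖g ξ'‖ ^ q) ξ +
        Set.indicator Aᶜ (fun ξ' : (EuclideanSpace ℝ (Fin m)) => ‖g ξ'‖ ^ q) ξ = ‖g ξ‖ ^ q := by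
      by_cases hmem : ξ ∈ A
      · simp [Set.indicator_of_mem, hmem]
      · simp [Set.indicator_of_notMem, hmem]
    rw [hind, hLdef, hΦdef]
    dsimp only
    rw [Real.div_rpow (hXnn ξ) (by positivity)]
    ring
  rw [hrw]
  by_cases hLint : Integrable L volume
  swap
  · rw [integral_undef hLint, Real.zero_rpow (by positivity : (1/q) ≠ 0)]
    exact hRHS
  -- measurability
  have hnormg : Measurable fun ξ : (EuclideanSpace ℝ (Fin m)) => ‖g ξ‖ := hgmeas.norm
  have hwmeas : Measurable (Function.uncurry w) := by
    rw [hwdef]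
    show Measurable fun x : ℝ × (EuclideanSpace ℝ (Fin m)) =>
      if x.2 ∈ A then Real.exp (-(x.1 * ‖x.2‖)) else Real.exp (x.1 * ‖x.2‖)
    apply Measurable.ite (measurable_snd hA)
    · exact ((measurable_fst.mul (continuous_norm.measurable.comp measurable_snd)).neg).exp
    · exact (measurable_fst.mul (continuous_norm.measurable.comp measurable_snd)).exp
  set F : ℝ → (EuclideanSpace ℝ (Fin m)) → ℝ≥0∞ :=
    fun t ξ => ENNReal.ofReal ((w t ξ * ‖g ξ‖) ^ p) with hFdef
  have hFmeas : Measurable (Function.uncurry F) := by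
    show Measurable fun x : ℝ × (EuclideanSpace ℝ (Fin m)) =>
      ENNReal.ofReal ((w x.1 x.2 * ‖g x.2‖) ^ p)
    exact ((hwmeas.mul (hnormg.comp measurable_snd)).pow measurable_const).ennreal_ofReal
  -- slice computation
  have hS : ∀ ξ : (EuclideanSpace ℝ (Fin m)), ξ ≠ 0 →
      (∫⁻ t in Set.Ioo (-a) a, F t ξ) = ENNReal.ofReal (Φ ξ * ‖g ξ‖ ^ p) := by
    intro ξ hξ
    have hc : 0 < ‖ξ‖ := norm_pos_iff.mpr hξ
    have hgp : (0:ℝ) ≤ ‖g ξ‖ ^ p := Real.rpow_nonneg (norm_nonneg _) _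
    by_cases hmem : ξ ∈ A
    · have hFe : ∀ t, F t ξ
          = ENNReal.ofReal (Real.exp (t * (-(p * ‖ξ‖))) * ‖g ξ‖ ^ p) := by
        intro t
        rw [hFdef, hwdef]
        dsimp only
        rw [if_pos hmem, Real.mul_rpow (Real.exp_pos _).le (norm_nonneg _), ← Real.exp_mul]
        congr 3
        ring
      simp_rw [hFe]
      rw [lint_exp_aux a _ _ ha.le (by nlinarith : -(p * ‖ξ‖) ≠ 0) hgp]
      congr 1
      rw [hΦdef]
      dsimp only
      rw [show a * -(p * ‖ξ‖) = -(p*a*‖ξ‖) by ring]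
      rw [show -(-(p*a*‖ξ‖)) = p*a*‖ξ‖ by ring]
      rw [show (Real.exp (-(p*a*‖ξ‖)) - Real.exp (p*a*‖ξ‖)) / -(p * ‖ξ‖)
        = (Real.exp (p*a*‖ξ‖) - Real.exp (-(p*a*‖ξ‖))) / (p * ‖ξ‖) by ring]
    · have hFe : ∀ t, F t ξ
          = ENNReal.ofReal (Real.exp (t * (p * ‖ξ‖)) * ‖g ξ‖ ^ p) := by
        intro t
        rw [hFdef, hwdef]
        dsimp only
        rw [if_neg hmem, Real.mul_rpow (Real.exp_pos _).le (norm_nonneg _), ← Real.exp_mul]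
        congr 3
        ring
      simp_rw [hFe]
      rw [lint_exp_aux a _ _ ha.le (by positivity : p * ‖ξ‖ ≠ 0) hgp]
      congr 1
      rw [hΦdef]
      dsimp only
      rw [show a * (p * ‖ξ‖) = p*a*‖ξ‖ by ring]
  -- a.e. nonzero
  haveI : Nonempty (Fin m) := ⟨⟨0, hm⟩⟩
  have hzero : ∀ᵐ ξ : (EuclideanSpace ℝ (Fin m)) ∂volume, ξ ≠ 0 := by
    rw [ae_iff]
    simp only [ne_eq, not_not]
    have h0 : {ξ : (EuclideanSpace ℝ (Fin m)) | ξ = 0} = {0} := by ext x; simp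
    rw [h0]
    exact measure_singleton 0
  set ν := (volume : Measure ℝ).restrict (Set.Ioo (-a) a) with hν
  have hLae : ∀ᵐ ξ : (EuclideanSpace ℝ (Fin m)) ∂volume,
      (∫⁻ t, F t ξ ∂ν) ^ r = ENNReal.ofReal (L ξ) := by
    filter_upwards [hzero] with ξ hξ
    have hgp : (0:ℝ) ≤ ‖g ξ‖ ^ p := Real.rpow_nonneg (norm_nonneg _) _
    rw [hν, hS ξ hξ, ENNReal.ofReal_rpow_of_nonneg (mul_nonneg (hΦnn ξ) hgp) hr0.le]
    congr 1
    rw [hLdef]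
    dsimp only
    rw [Real.mul_rpow (hΦnn ξ) hgp, ← Real.rpow_mul (norm_nonneg _), hpr]
  have hJeq : (∫⁻ ξ : (EuclideanSpace ℝ (Fin m)), (∫⁻ t, F t ξ ∂ν) ^ r)
      = ENNReal.ofReal (∫ ξ, L ξ) := by
    rw [lintegral_congr_ae hLae,
      ← ofReal_integral_eq_lintegral_ofReal hLint (Filter.Eventually.of_forall hLnn)]
  have hJtop : (∫⁻ ξ : (EuclideanSpace ℝ (Fin m)), (∫⁻ t, F t ξ ∂ν) ^ r) ≠ ⊤ := by
    rw [hJeq]; exact ENNReal.ofReal_ne_top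
  have hmink := minkowski_lintegral (volume : Measure (EuclideanSpace ℝ (Fin m))) ν
    hFmeas hr1 hJtop
  -- pointwise domination for integrability of slices
  have hwle : ∀ t ∈ Set.Ioo (-a) a, ∀ ξ : (EuclideanSpace ℝ (Fin m)), ξ ≠ 0 →
      (w t ξ) ^ p ≤ Φ ξ / min (a+t) (a-t) := by
    intro t ht ξ hξ
    obtain ⟨ht1, ht2⟩ := ht
    have hc : 0 < ‖ξ‖ := norm_pos_iff.mpr hξ
    have hu : 0 < p * ‖ξ‖ := by positivity
    have hδ : 0 < min (a+t) (a-t) := lt_min (by linarith) (by linarith)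
    rw [hwdef, hΦdef]
    dsimp only
    rw [div_div, le_div_iff₀ (by positivity)]
    by_cases hmem : ξ ∈ A
    · rw [if_pos hmem, ← Real.exp_mul]
      have key := exp_aux_ineq (a := a) (t := t) (u := p*‖ξ‖) hu.le (by linarith) (by linarith)
      rw [show a * (p*‖ξ‖) = p*a*‖ξ‖ by ring] at key
      rw [show -(t * ‖ξ‖) * p = -(t * (p*‖ξ‖)) by ring]
      have h1 : min (a+t) (a-t) ≤ a + t := min_le_left _ _
      nlinarith [key, mul_le_mul_of_nonneg_left (mul_le_mul_of_nonneg_left h1 hu.le)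
        (Real.exp_pos (-(t * (p*‖ξ‖)))).le]
    · rw [if_neg hmem, ← Real.exp_mul]
      have key := exp_aux_ineq (a := a) (t := -t) (u := p*‖ξ‖) hu.le (by linarith) (by linarith)
      rw [show a * (p*‖ξ‖) = p*a*‖ξ‖ by ring] at key
      rw [show -(-t * (p*‖ξ‖)) = t * (p*‖ξ‖) by ring] at key
      rw [show t * ‖ξ‖ * p = t * (p*‖ξ‖) by ring]
      have h1 : min (a+t) (a-t) ≤ a - t := min_le_right _ _
      nlinarith [key, mul_le_mul_of_nonneg_left (mul_le_mul_of_nonneg_left h1 hu.le)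
        (Real.exp_pos (t * (p*‖ξ‖))).le]
  have hwq : ∀ t (ξ : (EuclideanSpace ℝ (Fin m))),
      (w t ξ * ‖g ξ‖) ^ q = ((w t ξ)^p * ‖g ξ‖^p) ^ r := by
    intro t ξ
    rw [← hpr, Real.rpow_mul (mul_nonneg (hwpos t ξ).le (norm_nonneg _)),
      Real.mul_rpow (hwpos t ξ).le (norm_nonneg _)]
  have hdom : ∀ t ∈ Set.Ioo (-a) a, ∀ ξ : (EuclideanSpace ℝ (Fin m)), ξ ≠ 0 →
      (w t ξ * ‖g ξ‖) ^ q ≤ (min (a+t) (a-t))⁻¹ ^ r * L ξ := by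
    intro t ht ξ hξ
    have hδ : 0 < min (a+t) (a-t) := lt_min (by linarith [ht.1]) (by linarith [ht.2])
    have hgp : (0:ℝ) ≤ ‖g ξ‖ ^ p := Real.rpow_nonneg (norm_nonneg _) _
    rw [hwq t ξ]
    calc ((w t ξ)^p * ‖g ξ‖^p)^r ≤ (Φ ξ / min (a+t) (a-t) * ‖g ξ‖^p)^r := by
          apply Real.rpow_le_rpow
            (mul_nonneg (Real.rpow_nonneg (hwpos t ξ).le _) hgp) ?_ hr0.le
          exact mul_le_mul_of_nonneg_right (hwle t ht ξ hξ) hgp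
      _ = (min (a+t) (a-t))⁻¹ ^ r * L ξ := by
          have h1 : Φ ξ / min (a+t) (a-t) * ‖g ξ‖^p
              = (min (a+t) (a-t))⁻¹ * (Φ ξ * ‖g ξ‖^p) := by ring
          rw [h1, Real.mul_rpow (inv_nonneg.mpr hδ.le) (mul_nonneg (hΦnn ξ) hgp),
            Real.mul_rpow (hΦnn ξ) hgp, ← Real.rpow_mul (norm_nonneg _), hpr, hLdef]
  have hint_t : ∀ t ∈ Set.Ioo (-a) a,
      Integrable (fun ξ : (EuclideanSpace ℝ (Fin m)) => (w t ξ * ‖g ξ‖) ^ q) volume := by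
    intro t ht
    apply Integrable.mono' (hLint.const_mul ((min (a+t) (a-t))⁻¹ ^ r))
    · apply Measurable.aestronglyMeasurable
      exact (((hwmeas.comp (measurable_const.prodMk measurable_id)).mul hnormg).pow
        measurable_const)
    · filter_upwards [hzero] with ξ hξ
      rw [Real.norm_eq_abs,
        abs_of_nonneg (Real.rpow_nonneg (mul_nonneg (hwpos t ξ).le (norm_nonneg _)) _)]
      exact hdom t ht ξ hξ
  -- per-slice bound from hslice
  have hMb : ∀ t ∈ Set.Ioo (-a) a,
      (∫⁻ ξ : (EuclideanSpace ℝ (Fin m)), (F t ξ) ^ r) ^ (1/r)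
        ≤ ENNReal.ofReal (C_p ^ p * N t) := by
    intro t ht
    have hFr : ∀ ξ : (EuclideanSpace ℝ (Fin m)),
        (F t ξ)^r = ENNReal.ofReal ((w t ξ * ‖g ξ‖)^q) := by
      intro ξ
      rw [hFdef]
      dsimp only
      rw [ENNReal.ofReal_rpow_of_nonneg
          (Real.rpow_nonneg (mul_nonneg (hwpos t ξ).le (norm_nonneg _)) _) hr0.le,
        ← Real.rpow_mul (mul_nonneg (hwpos t ξ).le (norm_nonneg _)), hpr]
    simp_rw [hFr]
    rw [← ofReal_integral_eq_lintegral_ofReal (hint_t t ht)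
      (Filter.Eventually.of_forall fun ξ =>
        Real.rpow_nonneg (mul_nonneg (hwpos t ξ).le (norm_nonneg _)) _)]
    set M := ∫ ξ : (EuclideanSpace ℝ (Fin m)), (w t ξ * ‖g ξ‖)^q with hMdef
    have hMnn : 0 ≤ M := integral_nonneg fun ξ =>
      Real.rpow_nonneg (mul_nonneg (hwpos t ξ).le (norm_nonneg _)) _
    have hs := hslice t ht
    have hMeq : (∫ ξ : (EuclideanSpace ℝ (Fin m)),
        ‖((if ξ ∈ A then Real.exp (-(t * ‖ξ‖)) else Real.exp (t * ‖ξ‖)) : ℂ) * g ξ‖ ^ q)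
          = M := by
      rw [hMdef]
      apply integral_congr_ae
      apply Filter.Eventually.of_forall
      intro ξ
      beta_reduce
      rw [norm_mul]
      congr 2
      rw [hwdef]
      dsimp only
      by_cases hmem : ξ ∈ A
      · simp [hmem, Complex.norm_real, Real.norm_eq_abs, abs_of_pos (Real.exp_pos _), Complex.norm_exp]
      · simp [hmem, Complex.norm_real, Real.norm_eq_abs, abs_of_pos (Real.exp_pos _), Complex.norm_exp]
    rw [hMeq] at hs
    rw [ENNReal.ofReal_rpow_of_nonneg hMnn (by positivity)]
    apply ENNReal.ofReal_le_ofReal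
    have h2 : (M ^ ((1:ℝ)/q)) ^ p ≤ (C_p * N t ^ ((1:ℝ)/p)) ^ p :=
      Real.rpow_le_rpow (Real.rpow_nonneg hMnn _) hs hp0.le
    rw [← Real.rpow_mul hMnn, Real.mul_rpow hC.le (Real.rpow_nonneg (hNnn t) _),
      ← Real.rpow_mul (hNnn t), one_div_mul_cancel hp0.ne', Real.rpow_one] at h2
    calc M ^ ((1:ℝ)/r) = M ^ ((1:ℝ)/q * p) := by
          rw [hinvr]
          congr 1
          field_simp
      _ ≤ C_p ^ p * N t := h2
  -- integrate the per-slice bound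
  have hν_bound : (∫⁻ t, (∫⁻ ξ : (EuclideanSpace ℝ (Fin m)), (F t ξ)^r) ^ (1/r) ∂ν)
      ≤ ENNReal.ofReal (C_p^p * ∫ t in Set.Ioo (-a) a, N t) := by
    calc (∫⁻ t, (∫⁻ ξ : (EuclideanSpace ℝ (Fin m)), (F t ξ)^r) ^ (1/r) ∂ν)
        ≤ ∫⁻ t, ENNReal.ofReal (C_p^p * N t) ∂ν := by
          apply lintegral_mono_ae
          rw [hν, ae_restrict_iff' measurableSet_Ioo]
          exact Filter.Eventually.of_forall hMb
      _ = ENNReal.ofReal (∫ t in Set.Ioo (-a) a, C_p^p * N t) := by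
          rw [← ofReal_integral_eq_lintegral_ofReal (hf.const_mul _)
            (Filter.Eventually.of_forall fun t => mul_nonneg (by positivity) (hNnn t))]
      _ = ENNReal.ofReal (C_p^p * ∫ t in Set.Ioo (-a) a, N t) := by
          rw [integral_const_mul]
  have hmain : ENNReal.ofReal (∫ ξ, L ξ) ^ ((1:ℝ)/r)
      ≤ ENNReal.ofReal (C_p^p * ∫ t in Set.Ioo (-a) a, N t) := by
    rw [← hJeq]
    exact hmink.trans hν_bound
  have hIeq : (∫ t in (-a)..a, N t) = ∫ t in Set.Ioo (-a) a, N t := by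
    rw [intervalIntegral.integral_of_le (by linarith : -a ≤ a), integral_Ioc_eq_integral_Ioo]
  rw [hIeq]
  have hInn' : 0 ≤ ∫ t in Set.Ioo (-a) a, N t := by rw [← hIeq]; exact hInn
  have hLint_nn : 0 ≤ ∫ ξ, L ξ := integral_nonneg hLnn
  have hreal : (∫ ξ, L ξ) ^ ((1:ℝ)/r) ≤ C_p^p * ∫ t in Set.Ioo (-a) a, N t := by
    rw [ENNReal.ofReal_rpow_of_nonneg hLint_nn (by positivity)] at hmain
    exact (ENNReal.ofReal_le_ofReal_iff (mul_nonneg (by positivity) hInn')).mp hmain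
  have h3 : ((∫ ξ, L ξ) ^ ((1:ℝ)/r)) ^ ((1:ℝ)/p)
      ≤ (C_p^p * ∫ t in Set.Ioo (-a) a, N t) ^ ((1:ℝ)/p) :=
    Real.rpow_le_rpow (Real.rpow_nonneg hLint_nn _) hreal (by positivity)
  rw [← Real.rpow_mul hLint_nn,
    Real.mul_rpow (by positivity) hInn', ← Real.rpow_mul hC.le, mul_one_div_cancel hp0.ne', Real.rpow_one] at h3
  have he : (1:ℝ)/r * (1/p) = 1/q := by
    rw [hinvr]
    field_simp
  rw [he] at h3
  have h1 : (1:ℝ) ≤ 2 ^ ((1:ℝ)/q) := by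
    calc (1:ℝ) = 2 ^ (0:ℝ) := (Real.rpow_zero 2).symm
      _ ≤ 2 ^ ((1:ℝ)/q) := Real.rpow_le_rpow_of_exponent_le one_le_two (by positivity)
  calc (∫ ξ, L ξ) ^ ((1:ℝ)/q) ≤ C_p * (∫ t in Set.Ioo (-a) a, N t) ^ ((1:ℝ)/p) := h3
    _ ≤ 2 ^ ((1:ℝ)/q) * C_p * (∫ t in Set.Ioo (-a) a, N t) ^ ((1:ℝ)/p) := by
        nlinarith [mul_nonneg hC.le (Real.rpow_nonneg hInn' ((1:ℝ)/p)),
          Real.rpow_nonneg hInn' ((1:ℝ)/p)]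
end Aux
end

section
/- Let m = 2 and let x₀ ∈ ℝ, R ≥ 1. Then |∫_0^π e^{∓x₀ r} r · (e^{irR} - e^{-irR})/(irR) dr| ≤ C e^{|x₀|π}/R², where C is an absolute constant. -/
open MeasureTheory Real Complex

/-- The `m = 2` case of the `I₂₂` estimate in the bound of `sinc_B`:
`|∫_0^π e^{∓x₀ r} r (e^{irR}-e^{-irR})/(irR) dr| ≤ C e^{|x₀|π}/R²` with an absolute
constant `C`. -/
theorem sinc_I22_estimate_dim_two :
    ∃ C : ℝ, 0 < C ∧ ∀ x₀ R : ℝ, 1 ≤ R →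
      ‖∫ r in (0 : ℝ)..Real.pi,
          Complex.exp (-(x₀ * r)) * (r : ℂ) *
            ((Complex.exp (Complex.I * r * R) - Complex.exp (-(Complex.I * r * R))) /
              (Complex.I * r * R))‖ ≤
        C * Real.exp (|x₀| * Real.pi) / R ^ 2 := by
  refine ⟨4, by norm_num, fun x₀ R hR => ?_⟩
  have hR0 : (0:ℝ) < R := lt_of_lt_of_le one_pos hR
  set c₁ : ℂ := -x₀ + Complex.I * R with hc₁def
  set c₂ : ℂ := -x₀ - Complex.I * R with hc₂def
  have hc₁ : c₁ ≠ 0 := by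
    intro h
    have := congrArg Complex.im h
    simp [hc₁def] at this
    linarith
  have hc₂ : c₂ ≠ 0 := by
    intro h
    have := congrArg Complex.im h
    simp [hc₂def] at this
    linarith
  have hIR : (Complex.I * R) ≠ 0 := by
    simp [Complex.ext_iff, hR0.ne']
  -- pointwise rewrite of the integrand
  have hpt : ∀ r : ℝ,
      Complex.exp (-(x₀ * r)) * (r : ℂ) *
        ((Complex.exp (Complex.I * r * R) - Complex.exp (-(Complex.I * r * R))) /
          (Complex.I * r * R)) =
      (Complex.exp (c₁ * r) - Complex.exp (c₂ * r)) / (Complex.I * R) := by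
    intro r
    rcases eq_or_ne r 0 with h | h
    · simp [h]
    · have hr : (r : ℂ) ≠ 0 := Complex.ofReal_ne_zero.mpr h
      have e1 : Complex.exp (c₁ * r) =
          Complex.exp (-(x₀ * r)) * Complex.exp (Complex.I * r * R) := by
        rw [← Complex.exp_add, hc₁def]; ring_nf
      have e2 : Complex.exp (c₂ * r) =
          Complex.exp (-(x₀ * r)) * Complex.exp (-(Complex.I * r * R)) := by
        rw [← Complex.exp_add, hc₂def]; ring_nf
      have hdiv : (Complex.exp (Complex.I * r * R) - Complex.exp (-(Complex.I * r * R))) /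
          (Complex.I * r * R) =
          (Complex.exp (Complex.I * r * R) - Complex.exp (-(Complex.I * r * R))) /
            (Complex.I * R) / r := by
        rw [div_div]; ring_nf
      rw [hdiv, mul_assoc, mul_div_assoc', mul_div_cancel_left₀ _ hr, e1, e2]
      ring
  rw [intervalIntegral.integral_congr (fun r _ => hpt r)]
  have hint : ∀ c : ℂ, IntervalIntegrable (fun r : ℝ => Complex.exp (c * r))
      volume 0 Real.pi := fun c =>
    (Complex.continuous_exp.comp (by continuity)).intervalIntegrable _ _
  have hval : (∫ r in (0:ℝ)..Real.pi,
      (Complex.exp (c₁ * r) - Complex.exp (c₂ * r)) / (Complex.I * R)) =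
      ((Complex.exp (c₁ * Real.pi) - 1) / c₁ -
        (Complex.exp (c₂ * Real.pi) - 1) / c₂) / (Complex.I * R) := by
    rw [intervalIntegral.integral_div, intervalIntegral.integral_sub (hint c₁) (hint c₂),
      integral_exp_mul_complex hc₁, integral_exp_mul_complex hc₂]
    simp
  rw [hval]
  -- norm estimates
  have hnormIR : ‖Complex.I * (R:ℂ)‖ = R := by
    simp [abs_of_pos hR0]
  have key : ∀ c : ℂ, c ≠ 0 → |c.im| = R → c.re = -x₀ →
      ‖(Complex.exp (c * Real.pi) - 1) / c‖ ≤ 2 * Real.exp (|x₀| * Real.pi) / R := by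
    intro c hc him hre
    rw [norm_div]
    have hcn : R ≤ ‖c‖ := him ▸ Complex.abs_im_le_norm c
    have hnum : ‖Complex.exp (c * Real.pi) - 1‖ ≤ 2 * Real.exp (|x₀| * Real.pi) := by
      have h1 : ‖Complex.exp (c * Real.pi)‖ = Real.exp (-x₀ * Real.pi) := by
        rw [Complex.norm_exp]
        congr 1
        simp [hre]
      have h2 : Real.exp (-x₀ * Real.pi) ≤ Real.exp (|x₀| * Real.pi) := by
        apply Real.exp_le_exp.mpr
        have : -x₀ ≤ |x₀| := neg_le_abs x₀
        nlinarith [Real.pi_pos]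
      have h3 : (1:ℝ) ≤ Real.exp (|x₀| * Real.pi) := by
        rw [show (1:ℝ) = Real.exp 0 by simp]
        exact Real.exp_le_exp.mpr (by positivity)
      calc ‖Complex.exp (c * Real.pi) - 1‖ ≤ ‖Complex.exp (c * Real.pi)‖ + ‖(1:ℂ)‖ :=
            norm_sub_le _ _
        _ = Real.exp (-x₀ * Real.pi) + 1 := by rw [h1, norm_one]
        _ ≤ 2 * Real.exp (|x₀| * Real.pi) := by linarith
    exact div_le_div₀ (by positivity) hnum hR0 hcn
  have k₁ := key c₁ hc₁ (by simp [hc₁def, abs_of_pos hR0]) (by simp [hc₁def])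
  have k₂ := key c₂ hc₂ (by simp [hc₂def, abs_of_pos hR0]) (by simp [hc₂def])
  rw [norm_div, hnormIR]
  have hsum : ‖(Complex.exp (c₁ * Real.pi) - 1) / c₁ -
      (Complex.exp (c₂ * Real.pi) - 1) / c₂‖ ≤ 4 * Real.exp (|x₀| * Real.pi) / R := by
    calc _ ≤ ‖(Complex.exp (c₁ * Real.pi) - 1) / c₁‖ +
        ‖(Complex.exp (c₂ * Real.pi) - 1) / c₂‖ := norm_sub_le _ _
      _ ≤ 2 * Real.exp (|x₀| * Real.pi) / R + 2 * Real.exp (|x₀| * Real.pi) / R :=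
          add_le_add k₁ k₂
      _ = 4 * Real.exp (|x₀| * Real.pi) / R := by ring
  calc ‖(Complex.exp (c₁ * Real.pi) - 1) / c₁ -
      (Complex.exp (c₂ * Real.pi) - 1) / c₂‖ / R ≤
      (4 * Real.exp (|x₀| * Real.pi) / R) / R := by gcongr
    _ = 4 * Real.exp (|x₀| * Real.pi) / R ^ 2 := by rw [div_div, ← pow_two]
end
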